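/- If G is a graph with γ_g'(G) = 4, then for every edge e of G, γ_g'(G−e) ≥ 3. -/
import Mathlib


open Classical

noncomputable section

namespace DomGame

variable {V : Type*} [Fintype V]

/-- Closed neighborhood of `v` as a `Finset`. -/
noncomputable def N (G : SimpleGraph V) (v : V) : Finset V :=
  Finset.univ.filter (fun u => G.Adj v u ∨ u = v)

/-- Legal moves given the set `S` of already dominated vertices. -/
noncomputable def moves (G : SimpleGraph V) (S : Finset V) : Finset V :=
  Finset.univ.filter (fun v => ¬ N G v ⊆ S)

lemma card_lt {G : SimpleGraph V} {S : Finset V} (v : V) (hv : v ∈ moves G S) :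
    (Finset.univ \ (S ∪ N G v)).card < (Finset.univ \ S).card := by
  simp only [moves, Finset.mem_filter] at hv
  obtain ⟨u, hu, hus⟩ := Finset.not_subset.mp hv.2
  apply Finset.card_lt_card
  refine ⟨Finset.sdiff_subset_sdiff (le_refl _) Finset.subset_union_left, ?_⟩
  intro hsub
  have := hsub (Finset.mem_sdiff.mpr ⟨Finset.mem_univ u, hus⟩)
  rw [Finset.mem_sdiff, Finset.mem_union] at this
  exact this.2 (Or.inr hu)

mutual
/-- Number of moves with optimal play when it is Dominator's turn and
`S` is the set of already dominated vertices. -/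
noncomputable def gameD (G : SimpleGraph V) (S : Finset V) : ℕ :=
  if h : (moves G S).Nonempty then
    1 + (moves G S).attach.inf' (by simpa using h)
      (fun v => gameS G (S ∪ N G v.1))
  else 0
termination_by (Finset.univ \ S).card
decreasing_by exact card_lt v.1 v.2

/-- Number of moves with optimal play when it is Staller's turn. -/
noncomputable def gameS (G : SimpleGraph V) (S : Finset V) : ℕ :=
  if h : (moves G S).Nonempty then
    1 + (moves G S).attach.sup' (by simpa using h)
      (fun v => gameD G (S ∪ N G v.1))
  else 0
termination_by (Finset.univ \ S).card
decreasing_by exact card_lt v.1 v.2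
end

/-- The (Dominator-start) game domination number. -/
noncomputable def gammaG (G : SimpleGraph V) : ℕ := gameD G ∅

/-- The Staller-start game domination number. -/
noncomputable def gammaG' (G : SimpleGraph V) : ℕ := gameS G ∅

end DomGame

section Aux
open DomGame
variable {V : Type*} [Fintype V]

lemma mem_N_self (G : SimpleGraph V) (v : V) : v ∈ N G v := by
  simp [N]

lemma moves_not_nonempty {G : SimpleGraph V} {S : Finset V}
    (h : ¬ (moves G S).Nonempty) (u : V) : u ∈ S := by
  rw [Finset.not_nonempty_iff_eq_empty, Finset.eq_empty_iff_forall_notMem] at h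
  have := h u
  simp only [moves, Finset.mem_filter, Finset.mem_univ, true_and, not_not] at this
  exact this (mem_N_self G u)

lemma mem_moves_empty (G : SimpleGraph V) (v : V) : v ∈ moves G (∅ : Finset V) := by
  simp only [moves, Finset.mem_filter, Finset.mem_univ, true_and]
  intro hsub
  exact absurd (hsub (mem_N_self G v)) (by simp)

lemma gameS_eq_zero_mem {G : SimpleGraph V} {S : Finset V}
    (h : gameS G S = 0) (u : V) : u ∈ S := by
  rw [gameS] at h
  by_cases hne : (moves G S).Nonempty
  · rw [dif_pos hne] at h; omega
  · exact moves_not_nonempty hne u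

lemma gameD_le_one {G : SimpleGraph V} {S : Finset V}
    (hw : ∃ w : V, ∀ u : V, u ∈ S ∪ N G w) : gameD G S ≤ 1 := by
  obtain ⟨w, hw⟩ := hw
  rw [gameD]
  split_ifs with h
  · have hwmem : w ∈ moves G S := by
      by_contra hc
      simp only [moves, Finset.mem_filter, Finset.mem_univ, true_and, not_not] at hc
      obtain ⟨v, hv⟩ := h
      simp only [moves, Finset.mem_filter] at hv
      apply hv.2
      intro x _
      rcases Finset.mem_union.mp (hw x) with h1 | h2
      · exact h1
      · exact hc h2
    have hz : gameS G (S ∪ N G w) = 0 := by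
      rw [gameS, dif_neg]
      rintro ⟨v, hv⟩
      simp only [moves, Finset.mem_filter] at hv
      exact hv.2 (fun x _ => hw x)
    have hinf := Finset.inf'_le (fun v : {x // x ∈ moves G S} => gameS G (S ∪ N G v.1))
      (Finset.mem_attach _ ⟨w, hwmem⟩)
    rw [hz] at hinf
    omega
  · omega

end Aux

open DomGame in
/-- If `γ_g'(G) = 4`, then `γ_g'(G−e) ≥ 3` for every edge `e`. -/
theorem gameS_four_edge_removal {V : Type*} [Fintype V] (G : SimpleGraph V)
    (hG : gammaG' G = 4) (e : Sym2 V) (he : e ∈ G.edgeSet) :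
    3 ≤ gammaG' (G.deleteEdges {e}) := by
  by_contra hlt
  push_neg at hlt
  set G' := G.deleteEdges {e} with hG'def
  -- neighborhoods only shrink when deleting edges
  have hN : ∀ v u : V, u ∈ N G' v → u ∈ N G v := by
    intro v u hu
    simp only [N, Finset.mem_filter, Finset.mem_univ, true_and,
      SimpleGraph.deleteEdges_adj, hG'def] at hu ⊢
    tauto
  -- V is nonempty
  have hV : Nonempty V := by
    by_contra h
    have h0 : gammaG' G = 0 := by
      rw [gammaG', gameS, dif_neg]
      rintro ⟨v, -⟩
      exact h ⟨v⟩
    omega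
  obtain ⟨z⟩ := hV
  -- Staller's first move analysis in G'
  have h2 : ∀ v : V, gameD G' ((∅ : Finset V) ∪ N G' v) ≤ 1 := by
    intro v
    have hne : (moves G' (∅ : Finset V)).Nonempty := ⟨z, mem_moves_empty G' z⟩
    rw [gammaG', gameS, dif_pos hne] at hlt
    have hsup := Finset.le_sup' (fun w : {x // x ∈ moves G' (∅ : Finset V)} =>
      gameD G' ((∅ : Finset V) ∪ N G' w.1)) (Finset.mem_attach _ ⟨v, mem_moves_empty G' v⟩)
    have hsup' : gameD G' ((∅ : Finset V) ∪ N G' v) ≤ (moves G' (∅ : Finset V)).attach.sup'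
        (by simpa using hne) (fun w => gameD G' ((∅ : Finset V) ∪ N G' w.1)) := hsup
    omega
  -- for every v there is a w with N'[v] ∪ N'[w] = V
  have h3 : ∀ v : V, ∃ w : V, ∀ u : V, u ∈ ((∅ : Finset V) ∪ N G v) ∪ N G w := by
    intro v
    have hd := h2 v
    rw [gameD] at hd
    by_cases hne : (moves G' ((∅ : Finset V) ∪ N G' v)).Nonempty
    · rw [dif_pos hne] at hd
      obtain ⟨w, hwm, hweq⟩ := Finset.exists_mem_eq_inf' (Finset.attach_nonempty_iff.mpr hne)
        (fun x : {y // y ∈ moves G' ((∅ : Finset V) ∪ N G' v)} =>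
          gameS G' (((∅ : Finset V) ∪ N G' v) ∪ N G' x.1))
      have hzero : gameS G' (((∅ : Finset V) ∪ N G' v) ∪ N G' w.1) = 0 := by omega
      refine ⟨w.1, fun u => ?_⟩
      have := gameS_eq_zero_mem hzero u
      simp only [Finset.mem_union] at this ⊢
      rcases this with (h | h) | h
      · exact Or.inl (Or.inl h)
      · exact Or.inl (Or.inr (hN _ _ h))
      · exact Or.inr (hN _ _ h)
    · refine ⟨v, fun u => ?_⟩
      have := moves_not_nonempty hne u
      simp only [Finset.mem_union] at this ⊢
      rcases this with h | h
      · exact Or.inl (Or.inl h)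
      · exact Or.inl (Or.inr (hN _ _ h))
  -- conclude γ_g'(G) ≤ 2
  have h4 : gammaG' G ≤ 2 := by
    have hne : (moves G (∅ : Finset V)).Nonempty := ⟨z, mem_moves_empty G z⟩
    rw [gammaG', gameS, dif_pos hne]
    have hsup : (moves G (∅ : Finset V)).attach.sup' (by simpa using hne)
        (fun v => gameD G ((∅ : Finset V) ∪ N G v.1)) ≤ 1 := by
      apply Finset.sup'_le
      intro v _
      exact gameD_le_one (h3 v.1)
    omega
  omega
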